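/- Let a path graph have each vertex labeled heavy or light, and let a meta agent representing a pair of agents receive, via the described round-robin picking of leftmost available chores with at least two meta agents, a set of chores forming a disjoint union of isolated vertices and edges where each edge joins one heavy and one light chore, with the total number of heavy chores even and the total number of light chores even. Then the chores can be partitioned between the two constituent agents such that each agent gets exactly half of the heavy chores, exactly half of the light chores, and no agent receives two adjacent chores. -/

import Mathlib

namespace Stmt15

/-- Path graph on ℕ: chores h and h+1 conflict. -/
def adj (a b : ℕ) : Prop := a + 1 = b ∨ b + 1 = a

def Indep (S : Finset ℕ) : Prop := ∀ a ∈ S, ∀ b ∈ S, ¬ adj a b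

lemma adj_symm {a b : ℕ} (h : adj a b) : adj b a := Or.symm h

lemma not_adj_self (a : ℕ) : ¬ adj a a := by
  intro h; rcases h with h | h <;> omega

lemma indep_insert {C : Finset ℕ} {z : ℕ} (hC : Indep C)
    (hz : ∀ c ∈ C, ¬ adj z c) : Indep (insert z C) := by
  intro a ha b hb hab
  rcases Finset.mem_insert.mp ha with h1 | h1
  · subst h1
    rcases Finset.mem_insert.mp hb with h2 | h2
    · subst h2; exact not_adj_self b hab
    · exact hz b h2 hab
  · rcases Finset.mem_insert.mp hb with h2 | h2
    · subst h2; exact hz a h1 (adj_symm hab)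
    · exact hC a h1 b h2 hab

lemma key (heavy : ℕ → Bool) :
    ∀ S : Finset ℕ,
    (∀ a b c : ℕ, a ∈ S → b ∈ S → c ∈ S → adj a b → adj b c → a = c) →
    (∀ a b : ℕ, a ∈ S → b ∈ S → adj a b → heavy a ≠ heavy b) →
    (S.filter (fun c => heavy c = true)).card % 2
      = (S.filter (fun c => heavy c = false)).card % 2 →
    ∃ A B : Finset ℕ,
      Disjoint A B ∧ A ∪ B = S ∧ Indep A ∧ Indep B ∧
      (A.filter (fun c => heavy c = true)).card
        = ((S.filter (fun c => heavy c = true)).card + 1) / 2 ∧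
      (B.filter (fun c => heavy c = true)).card
        = (S.filter (fun c => heavy c = true)).card / 2 ∧
      (A.filter (fun c => heavy c = false)).card
        = (S.filter (fun c => heavy c = false)).card / 2 ∧
      (B.filter (fun c => heavy c = false)).card
        = ((S.filter (fun c => heavy c = false)).card + 1) / 2 := by
  intro S
  induction S using Finset.strongInduction with
  | _ S IH =>
  intro hcomp hedge hpar
  by_cases hE : ∃ a ∈ S, ∃ b ∈ S, adj a b
  · -- there is an edge; pick it with x heavy, y light
    obtain ⟨a, ha, b, hb, hab⟩ := hE
    obtain ⟨x, y, hx, hy, hxy, hhx, hhy⟩ :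
        ∃ x y, x ∈ S ∧ y ∈ S ∧ adj x y ∧ heavy x = true ∧ heavy y = false := by
      have hne := hedge a b ha hb hab
      cases hA : heavy a
      · cases hB : heavy b
        · rw [hA, hB] at hne; exact absurd rfl hne
        · exact ⟨b, a, hb, ha, adj_symm hab, hB, hA⟩
      · cases hB : heavy b
        · exact ⟨a, b, ha, hb, hab, hA, hB⟩
        · rw [hA, hB] at hne; exact absurd rfl hne
    have hxny : x ≠ y := by
      intro h; rw [h, hhy] at hhx; exact Bool.noConfusion hhx
    set T := S \ {x, y} with hTdef
    have hxT : x ∉ T := by simp [hTdef]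
    have hyT : y ∉ T := by simp [hTdef]
    have hTsub : T ⊆ S := Finset.sdiff_subset
    have hmemT : ∀ c ∈ T, c ∈ S ∧ c ≠ x ∧ c ≠ y := by
      intro c hc
      simp only [hTdef, Finset.mem_sdiff, Finset.mem_insert, Finset.mem_singleton] at hc
      tauto
    have hSeq : S = insert x (insert y T) := by
      ext c
      simp only [Finset.mem_insert, hTdef, Finset.mem_sdiff, Finset.mem_singleton]
      constructor
      · intro h
        by_cases h1 : c = x
        · tauto
        · by_cases h2 : c = y <;> tauto
      · rintro (rfl | rfl | ⟨h, _⟩) <;> assumption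
    have hyiT : y ∉ insert y T → False := by intro h; exact h (Finset.mem_insert_self _ _)
    have hxiT : x ∉ insert y T := by
      intro h
      rcases Finset.mem_insert.mp h with h | h
      · exact hxny h
      · exact hxT h
    -- filter decompositions
    have hfxS : S.filter (fun c => heavy c = true)
        = insert x (T.filter (fun c => heavy c = true)) := by
      rw [hSeq, Finset.filter_insert, Finset.filter_insert]
      simp [hhx, hhy]
    have hfyS : S.filter (fun c => heavy c = false)
        = insert y (T.filter (fun c => heavy c = false)) := by
      rw [hSeq, Finset.filter_insert, Finset.filter_insert]
      simp [hhx, hhy]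
    have hxfT : x ∉ T.filter (fun c => heavy c = true) := by
      intro h; exact hxT (Finset.filter_subset _ _ h)
    have hyfT : y ∉ T.filter (fun c => heavy c = false) := by
      intro h; exact hyT (Finset.filter_subset _ _ h)
    have hcardH : (S.filter (fun c => heavy c = true)).card
        = (T.filter (fun c => heavy c = true)).card + 1 := by
      rw [hfxS, Finset.card_insert_of_notMem hxfT]
    have hcardL : (S.filter (fun c => heavy c = false)).card
        = (T.filter (fun c => heavy c = false)).card + 1 := by
      rw [hfyS, Finset.card_insert_of_notMem hyfT]
    have hparT : (T.filter (fun c => heavy c = true)).card % 2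
        = (T.filter (fun c => heavy c = false)).card % 2 := by omega
    have hss : T ⊂ S := (Finset.ssubset_iff_of_subset hTsub).mpr ⟨x, hx, hxT⟩
    obtain ⟨A', B', hdisj, hunion, hiA, hiB, c1, c2, c3, c4⟩ :=
      IH T hss
        (fun a b c ha hb hc h1 h2 => hcomp a b c (hTsub ha) (hTsub hb) (hTsub hc) h1 h2)
        (fun a b ha hb h => hedge a b (hTsub ha) (hTsub hb) h) hparT
    have hA'T : A' ⊆ T := hunion ▸ Finset.subset_union_left
    have hB'T : B' ⊆ T := hunion ▸ Finset.subset_union_right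
    have hadjx : ∀ c ∈ T, ¬ adj x c := by
      intro c hc hadj
      have h := hcomp y x c hy hx (hTsub hc) (adj_symm hxy) hadj
      exact (hmemT c hc).2.2 h.symm
    have hadjy : ∀ c ∈ T, ¬ adj y c := by
      intro c hc hadj
      have h := hcomp x y c hx hy (hTsub hc) hxy hadj
      exact (hmemT c hc).2.1 h.symm
    have hxA' : x ∉ A' := fun h => hxT (hA'T h)
    have hxB' : x ∉ B' := fun h => hxT (hB'T h)
    have hyA' : y ∉ A' := fun h => hyT (hA'T h)
    have hyB' : y ∉ B' := fun h => hyT (hB'T h)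
    by_cases hHT : (T.filter (fun c => heavy c = true)).card % 2 = 0
    · -- x → A, y → B
      refine ⟨insert x A', insert y B', ?_, ?_, ?_, ?_, ?_, ?_, ?_, ?_⟩
      · rw [Finset.disjoint_left]
        intro c hc hc'
        rcases Finset.mem_insert.mp hc with rfl | hc
        · rcases Finset.mem_insert.mp hc' with h | h
          · exact hxny h
          · exact hxB' h
        · rcases Finset.mem_insert.mp hc' with rfl | h
          · exact hyA' hc
          · exact (Finset.disjoint_left.mp hdisj hc) h
      · rw [Finset.insert_union, Finset.union_insert, hunion, ← hSeq]
      · exact indep_insert hiA (fun c hc => hadjx c (hA'T hc))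
      · exact indep_insert hiB (fun c hc => hadjy c (hB'T hc))
      · rw [Finset.filter_insert]
        rw [if_pos hhx, Finset.card_insert_of_notMem (fun h => hxA' (Finset.filter_subset _ _ h))]
        omega
      · rw [Finset.filter_insert]
        rw [if_neg (by simp [hhy])]
        omega
      · rw [Finset.filter_insert]
        rw [if_neg (by simp [hhx])]
        omega
      · rw [Finset.filter_insert]
        rw [if_pos hhy, Finset.card_insert_of_notMem (fun h => hyB' (Finset.filter_subset _ _ h))]
        omega
    · -- y → A, x → B
      refine ⟨insert y A', insert x B', ?_, ?_, ?_, ?_, ?_, ?_, ?_, ?_⟩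
      · rw [Finset.disjoint_left]
        intro c hc hc'
        rcases Finset.mem_insert.mp hc with rfl | hc
        · rcases Finset.mem_insert.mp hc' with h | h
          · exact hxny h.symm
          · exact hyB' h
        · rcases Finset.mem_insert.mp hc' with rfl | h
          · exact hxA' hc
          · exact (Finset.disjoint_left.mp hdisj hc) h
      · rw [Finset.insert_union, Finset.union_insert, hunion]
        rw [hSeq, Finset.insert_comm]
      · exact indep_insert hiA (fun c hc => hadjy c (hA'T hc))
      · exact indep_insert hiB (fun c hc => hadjx c (hB'T hc))
      · rw [Finset.filter_insert]
        rw [if_neg (by simp [hhy])]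
        omega
      · rw [Finset.filter_insert]
        rw [if_pos hhx, Finset.card_insert_of_notMem (fun h => hxB' (Finset.filter_subset _ _ h))]
        omega
      · rw [Finset.filter_insert]
        rw [if_pos hhy, Finset.card_insert_of_notMem (fun h => hyA' (Finset.filter_subset _ _ h))]
        omega
      · rw [Finset.filter_insert]
        rw [if_neg (by simp [hhx])]
        omega
  · -- no edges at all in S
    push_neg at hE
    obtain ⟨A1, hA1sub, hA1card⟩ := Finset.exists_subset_card_eq
      (s := (S.filter (fun c => heavy c = true)))
      (n := (((S.filter (fun c => heavy c = true)).card + 1) / 2)) (by omega)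
    obtain ⟨A2, hA2sub, hA2card⟩ := Finset.exists_subset_card_eq
      (s := (S.filter (fun c => heavy c = false)))
      (n := ((S.filter (fun c => heavy c = false)).card / 2)) (by omega)
    set A := A1 ∪ A2 with hAdef
    have hAsub : A ⊆ S := by
      apply Finset.union_subset
      · exact hA1sub.trans (Finset.filter_subset _ _)
      · exact hA2sub.trans (Finset.filter_subset _ _)
    set B := S \ A with hBdef
    have hdisj : Disjoint A B := Finset.disjoint_sdiff
    have hunion : A ∪ B = S := Finset.union_sdiff_of_subset hAsub
    have hBsub : B ⊆ S := Finset.sdiff_subset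
    have hAft : A.filter (fun c => heavy c = true) = A1 := by
      rw [hAdef, Finset.filter_union]
      have h1 : A1.filter (fun c => heavy c = true) = A1 :=
        Finset.filter_eq_self.mpr (fun c hc => (Finset.mem_filter.mp (hA1sub hc)).2)
      have h2 : A2.filter (fun c => heavy c = true) = ∅ := by
        rw [Finset.filter_eq_empty_iff]
        intro c hc
        have := (Finset.mem_filter.mp (hA2sub hc)).2
        simp [this]
      rw [h1, h2, Finset.union_empty]
    have hAff : A.filter (fun c => heavy c = false) = A2 := by
      rw [hAdef, Finset.filter_union]
      have h1 : A2.filter (fun c => heavy c = false) = A2 :=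
        Finset.filter_eq_self.mpr (fun c hc => (Finset.mem_filter.mp (hA2sub hc)).2)
      have h2 : A1.filter (fun c => heavy c = false) = ∅ := by
        rw [Finset.filter_eq_empty_iff]
        intro c hc
        have := (Finset.mem_filter.mp (hA1sub hc)).2
        simp [this]
      rw [h1, h2, Finset.empty_union]
    have hsplitT : (A.filter (fun c => heavy c = true)).card
        + (B.filter (fun c => heavy c = true)).card
        = (S.filter (fun c => heavy c = true)).card := by
      rw [← Finset.card_union_of_disjoint (Finset.disjoint_filter_filter hdisj),
        ← Finset.filter_union, hunion]
    have hsplitF : (A.filter (fun c => heavy c = false)).card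
        + (B.filter (fun c => heavy c = false)).card
        = (S.filter (fun c => heavy c = false)).card := by
      rw [← Finset.card_union_of_disjoint (Finset.disjoint_filter_filter hdisj),
        ← Finset.filter_union, hunion]
    refine ⟨A, B, hdisj, hunion, ?_, ?_, ?_, ?_, ?_, ?_⟩
    · exact fun a ha b hb => hE a (hAsub ha) b (hAsub hb)
    · exact fun a ha b hb => hE a (hBsub ha) b (hBsub hb)
    · rw [hAft]; exact hA1card
    · have := hAft ▸ hA1card
      omega
    · rw [hAff]; exact hA2card
    · have := hAff ▸ hA2card
      omega

theorem two_agent_subproblem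
    (S : Finset ℕ)                -- chores received by the meta agent
    (heavy : ℕ → Bool)            -- heavy/light labels
    -- the induced graph on S is a disjoint union of isolated vertices and edges
    (hcomp : ∀ a b c : ℕ, a ∈ S → b ∈ S → c ∈ S → adj a b → adj b c → a = c)
    -- every edge joins one heavy and one light chore
    (hedge : ∀ a b : ℕ, a ∈ S → b ∈ S → adj a b → heavy a ≠ heavy b)
    -- the numbers of heavy and of light chores are both even
    (hH : Even ((S.filter (fun c => heavy c = true)).card))
    (hL : Even ((S.filter (fun c => heavy c = false)).card)) :
    ∃ A B : Finset ℕ,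
      Disjoint A B ∧ A ∪ B = S ∧ Indep A ∧ Indep B ∧
      (A.filter (fun c => heavy c = true)).card
        = (B.filter (fun c => heavy c = true)).card ∧
      (A.filter (fun c => heavy c = false)).card
        = (B.filter (fun c => heavy c = false)).card := by
  obtain ⟨k, hk⟩ := hH
  obtain ⟨m, hm⟩ := hL
  obtain ⟨A, B, h1, h2, h3, h4, e1, e2, e3, e4⟩ :=
    key heavy S hcomp hedge (by omega)
  exact ⟨A, B, h1, h2, h3, h4, by omega, by omega⟩

end Stmt15
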